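/- With c₄ = (-1,-1,-1,1) (so that c₄ = ⅓d₁ + ⅓d₂ + ⅓d₃ lies on the 3-dimensional cone cone(d₁,d₂,d₃)), the cone σ₁₉ = cone(d₁,d₂,d₃,d₄) equals the union cone(c₄,d₂,d₃,d₄) ∪ cone(d₁,c₄,d₃,d₄) ∪ cone(d₁,d₂,c₄,d₄), and each of these three cones has generator matrix (columns in the listed order) of determinant 1. -/

import Mathlib

open Matrix

noncomputable section

def d1 : Fin 4 → ℝ := ![-1, 0, -2, 1]
def d2 : Fin 4 → ℝ := ![-2, -1, 0, 1]
def d3 : Fin 4 → ℝ := ![0, -2, -1, 1]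
def d4 : Fin 4 → ℝ := ![1, 0, 1, -1]
def c4 : Fin 4 → ℝ := ![-1, -1, -1, 1]

/-- The cone generated by four vectors: all nonnegative linear combinations. -/
def cone4 (v1 v2 v3 v4 : Fin 4 → ℝ) : Set (Fin 4 → ℝ) :=
  {x | ∃ a b c d : ℝ, 0 ≤ a ∧ 0 ≤ b ∧ 0 ≤ c ∧ 0 ≤ d ∧
    x = a • v1 + b • v2 + c • v3 + d • v4}

/-- The 4×4 matrix whose columns are `v1, v2, v3, v4` (in this order). -/
def colMat (v1 v2 v3 v4 : Fin 4 → ℝ) : Matrix (Fin 4) (Fin 4) ℝ :=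
  (Matrix.of ![v1, v2, v3, v4])ᵀ

lemma comb1 (a b c d : ℝ) :
    a • d1 + b • d2 + c • d3 + d • d4
      = (3*a) • c4 + (b-a) • d2 + (c-a) • d3 + d • d4 := by
  funext i; fin_cases i <;>
    simp [d1, d2, d3, d4, c4] <;> ring

lemma comb2 (a b c d : ℝ) :
    a • d1 + b • d2 + c • d3 + d • d4
      = (a-b) • d1 + (3*b) • c4 + (c-b) • d3 + d • d4 := by
  funext i; fin_cases i <;>
    simp [d1, d2, d3, d4, c4] <;> ring

lemma comb3 (a b c d : ℝ) :
    a • d1 + b • d2 + c • d3 + d • d4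
      = (a-c) • d1 + (b-c) • d2 + (3*c) • c4 + d • d4 := by
  funext i; fin_cases i <;>
    simp [d1, d2, d3, d4, c4] <;> ring

theorem subdivision_of_sigma19 :
    c4 = (1/3 : ℝ) • d1 + (1/3 : ℝ) • d2 + (1/3 : ℝ) • d3 ∧
    cone4 d1 d2 d3 d4 =
      cone4 c4 d2 d3 d4 ∪
      cone4 d1 c4 d3 d4 ∪
      cone4 d1 d2 c4 d4 ∧
    (colMat c4 d2 d3 d4).det = 1 ∧
    (colMat d1 c4 d3 d4).det = 1 ∧
    (colMat d1 d2 c4 d4).det = 1 := by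
  refine ⟨?_, ?_, ?_, ?_, ?_⟩
  · funext i; fin_cases i <;> norm_num [d1, d2, d3, c4]
  · ext x
    constructor
    · rintro ⟨a, b, c, d, ha, hb, hc, hd, rfl⟩
      rcases le_total a b with hab | hab
      · rcases le_total a c with hac | hac
        · exact Or.inl <| Or.inl ⟨3*a, b-a, c-a, d, by positivity, by linarith,
            by linarith, hd, comb1 a b c d⟩
        · exact Or.inr ⟨a-c, b-c, 3*c, d, by linarith, by linarith,
            by positivity, hd, comb3 a b c d⟩
      · rcases le_total b c with hbc | hbc
        · exact Or.inl <| Or.inr ⟨a-b, 3*b, c-b, d, by linarith, by positivity,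
            by linarith, hd, comb2 a b c d⟩
        · exact Or.inr ⟨a-c, b-c, 3*c, d, by linarith, by linarith,
            by positivity, hd, comb3 a b c d⟩
    · rintro ((⟨a, b, c, d, ha, hb, hc, hd, rfl⟩ | ⟨a, b, c, d, ha, hb, hc, hd, rfl⟩) |
        ⟨a, b, c, d, ha, hb, hc, hd, rfl⟩)
      · exact ⟨a/3, a/3+b, a/3+c, d, by positivity, by positivity, by positivity, hd,
          by funext i; fin_cases i <;> simp [d1, d2, d3, d4, c4] <;> ring⟩
      · exact ⟨a+b/3, b/3, b/3+c, d, by positivity, by positivity, by positivity, hd,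
          by funext i; fin_cases i <;> simp [d1, d2, d3, d4, c4] <;> ring⟩
      · exact ⟨a+c/3, b+c/3, c/3, d, by positivity, by positivity, by positivity, hd,
          by funext i; fin_cases i <;> simp [d1, d2, d3, d4, c4] <;> ring⟩
  · have h : colMat c4 d2 d3 d4 =
        !![-1,-2,0,1; -1,-1,-2,0; -1,0,-1,1; 1,1,1,-1] := by
      ext i j; fin_cases i <;> fin_cases j <;> rfl
    rw [h, Matrix.det_succ_row_zero]; simp [Fin.sum_univ_succ, Matrix.det_fin_three, Fin.succAbove]; norm_num
  · have h : colMat d1 c4 d3 d4 =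
        !![-1,-1,0,1; 0,-1,-2,0; -2,-1,-1,1; 1,1,1,-1] := by
      ext i j; fin_cases i <;> fin_cases j <;> rfl
    rw [h, Matrix.det_succ_row_zero]; simp [Fin.sum_univ_succ, Matrix.det_fin_three, Fin.succAbove]; norm_num
  · have h : colMat d1 d2 c4 d4 =
        !![-1,-2,-1,1; 0,-1,-1,0; -2,0,-1,1; 1,1,1,-1] := by
      ext i j; fin_cases i <;> fin_cases j <;> rfl
    rw [h, Matrix.det_succ_row_zero]; simp [Fin.sum_univ_succ, Matrix.det_fin_three, Fin.succAbove]; norm_num
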